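/- In the setting of the complete metric space (W, Δ) of admissible controls, assume in addition that l : ℝⁿ → ℝ is Lipschitz of rank k_l on the ε-ball around x*(b), and that h : [a,b] × ℝⁿ → ℝ satisfies: for every x ∈ ℝⁿ the function t ↦ h(t,x) is continuous on [a,b], and there is k_h > 0 such that x ↦ h(t,x) is Lipschitz of rank k_h for every t ∈ [a,b]. For i ∈ ℕ define J_i(u) := l(x_u(b)) + i ∫_a^b h⁺(t, x_u(t)) dt, where h⁺(t,x) := max{0, h(t,x)}. Then J_i is Lipschitz continuous on (W, Δ); more precisely, |J_i(u) − J_i(v)| ≤ (k_l + i k_h (b−a)) e^{k_x(b−a)} k_u Δ(u,v) for all u, v ∈ W. -/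

import Mathlib

open MeasureTheory Set Filter

noncomputable section

/-- Shorthand for Euclidean space `ℝⁿ`. -/
abbrev Vec (n : ℕ) := EuclideanSpace ℝ (Fin n)

/-- Membership in the set `W` of admissible controls, together with the associated
trajectory `x` of `ẋ = f(t,x,u(t))`, `x(a) = x_a` (encoded via an integrable derivative
`x'` and the integral representation), staying in the `ε`-tube around `x*` with
`x(b) ∈ E_b`. -/
def InW {n k : ℕ} (a b : ℝ) (f : ℝ → Vec n → Vec k → Vec n) (U : ℝ → Set (Vec k))
    (xa : Vec n) (Eb : Set (Vec n)) (xstar : ℝ → Vec n) (ε : ℝ)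
    (u : ℝ → Vec k) (x x' : ℝ → Vec n) : Prop :=
  AEStronglyMeasurable u (volume.restrict (Icc a b)) ∧
  (∀ᵐ t ∂(volume.restrict (Icc a b)), u t ∈ U t) ∧
  IntegrableOn x' (Icc a b) ∧
  x a = xa ∧
  (∀ t ∈ Icc a b, x t = xa + ∫ s in a..t, x' s) ∧
  (∀ᵐ t ∂(volume.restrict (Icc a b)), x' t = f t (x t) (u t)) ∧
  (∀ t ∈ Icc a b, ‖x t - xstar t‖ ≤ ε) ∧
  x b ∈ Eb

open Topology

/-- continuity of the trajectory -/
lemma traj_cont {n : ℕ} {a b : ℝ} (hab : a ≤ b) {xa : Vec n} {x x' : ℝ → Vec n}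
    (hint : IntegrableOn x' (Icc a b)) (hrep : ∀ t ∈ Icc a b, x t = xa + ∫ s in a..t, x' s) :
    ContinuousOn x (Icc a b) := by
  have h1 : ContinuousOn (fun t => xa + ∫ s in a..t, x' s) (Icc a b) := by
    apply continuousOn_const.add
    have := intervalIntegral.continuousOn_primitive_interval (μ := volume) (a := a) (b := b)
      (f := x') (by rwa [uIcc_of_le hab])
    rwa [uIcc_of_le hab] at this
  exact h1.congr hrep

/-- Grönwall in integral form. -/
lemma gronwall_int {w : ℝ → ℝ} {a b K C : ℝ} (hab : a ≤ b) (hK : 0 ≤ K) (hC : 0 ≤ C)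
    (hw : ContinuousOn w (Icc a b)) (hw0 : ∀ t ∈ Icc a b, 0 ≤ w t)
    (hbound : ∀ t ∈ Icc a b, w t ≤ K * (∫ s in a..t, w s) + C) :
    ∀ t ∈ Icc a b, w t ≤ C * Real.exp (K * (b - a)) := by
  set φ : ℝ → ℝ := fun t => ∫ s in a..t, w s with hφ
  have hwint : ∀ t ∈ Icc a b, IntervalIntegrable w volume a t := by
    intro t ht
    apply ContinuousOn.intervalIntegrable
    rw [uIcc_of_le ht.1]
    exact hw.mono (Icc_subset_Icc le_rfl ht.2)
  have hφcont : ContinuousOn φ (Icc a b) := by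
    have := intervalIntegral.continuousOn_primitive_interval (μ := volume) (a := a) (b := b)
      (f := w) (by rw [uIcc_of_le hab]; exact hw.integrableOn_compact isCompact_Icc)
    rwa [uIcc_of_le hab] at this
  have hφ0 : ∀ t ∈ Icc a b, 0 ≤ φ t := by
    intro t ht
    exact intervalIntegral.integral_nonneg ht.1
      (fun s hs => hw0 s ⟨hs.1, hs.2.trans ht.2⟩)
  have hderiv : ∀ t ∈ Ico a b, HasDerivWithinAt φ (w t) (Ici t) t := by
    intro t ht
    have hmem : Icc a b ∈ 𝓝[Ici t] t :=
      mem_nhdsWithin.mpr ⟨Iio b, isOpen_Iio, ht.2, by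
        rintro s ⟨hs1, hs2⟩; exact ⟨ht.1.trans hs2, le_of_lt hs1⟩⟩
    have hmem' : Icc a b ∈ 𝓝[Ioi t] t := nhdsWithin_mono t Ioi_subset_Ici_self hmem
    refine intervalIntegral.integral_hasDerivWithinAt_right
      (hwint t ⟨ht.1, ht.2.le⟩)
      ⟨Icc a b, hmem', hw.aestronglyMeasurable measurableSet_Icc⟩ ?_
    exact (hw.continuousWithinAt ⟨ht.1, ht.2.le⟩).mono_of_mem_nhdsWithin hmem'
  have hGB := norm_le_gronwallBound_of_norm_deriv_right_le (f := φ) (f' := w)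
    (δ := 0) (K := K) (ε := C) hφcont hderiv (by simp [hφ]) ?_
  · intro t ht
    have h1 : φ t ≤ gronwallBound 0 K C (t - a) := by
      have := hGB t ht
      rwa [Real.norm_eq_abs, abs_of_nonneg (hφ0 t ht)] at this
    have h2 : w t ≤ K * gronwallBound 0 K C (t - a) + C :=
      (hbound t ht).trans (add_le_add_left (mul_le_mul_of_nonneg_left h1 hK) C)
    rcases eq_or_lt_of_le hK with hK0 | hKpos
    · rw [← hK0] at h2 ⊢
      simpa using h2.trans (by nlinarith [Real.exp_zero])
    · rw [gronwallBound_of_K_ne_0 hKpos.ne'] at h2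
      have h3 : K * (0 * Real.exp (K * (t - a)) + C / K * (Real.exp (K * (t - a)) - 1)) + C
          = C * Real.exp (K * (t - a)) := by
        field_simp; ring
      rw [h3] at h2
      refine h2.trans (mul_le_mul_of_nonneg_left ?_ hC)
      exact Real.exp_le_exp.2 (by nlinarith [ht.2])
  · intro t ht
    rw [Real.norm_eq_abs, Real.norm_eq_abs, abs_of_nonneg (hw0 t ⟨ht.1, ht.2.le⟩),
      abs_of_nonneg (hφ0 t ⟨ht.1, ht.2.le⟩)]
    exact hbound t ⟨ht.1, ht.2.le⟩

/-- continuity of t ↦ h t (x t) -/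
lemma comp_cont {n : ℕ} {a b kh : ℝ} (hkh : 0 ≤ kh) {h : ℝ → Vec n → ℝ} {x : ℝ → Vec n}
    (hht : ∀ y : Vec n, ContinuousOn (fun t => h t y) (Icc a b))
    (hhx : ∀ t ∈ Icc a b, LipschitzWith (Real.toNNReal kh) (fun y : Vec n => h t y))
    (hx : ContinuousOn x (Icc a b)) :
    ContinuousOn (fun t => h t (x t)) (Icc a b) := by
  intro s hs
  have hd1 : Tendsto (fun t => dist (x t) (x s)) (𝓝[Icc a b] s) (𝓝 0) :=
    tendsto_iff_dist_tendsto_zero.1 (hx s hs)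
  have hd2 : Tendsto (fun t => dist (h t (x s)) (h s (x s))) (𝓝[Icc a b] s) (𝓝 0) :=
    tendsto_iff_dist_tendsto_zero.1 (hht (x s) s hs)
  have key : Tendsto (fun t => dist (h t (x t)) (h s (x s))) (𝓝[Icc a b] s) (𝓝 0) := by
    have hB : Tendsto (fun t => kh * dist (x t) (x s) + dist (h t (x s)) (h s (x s)))
        (𝓝[Icc a b] s) (𝓝 0) := by
      have := (hd1.const_mul kh).add hd2
      simpa using this
    refine squeeze_zero' (Eventually.of_forall fun t => dist_nonneg) ?_ hB
    filter_upwards [eventually_mem_nhdsWithin] with t ht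
    calc dist (h t (x t)) (h s (x s))
        ≤ dist (h t (x t)) (h t (x s)) + dist (h t (x s)) (h s (x s)) := dist_triangle _ _ _
      _ ≤ kh * dist (x t) (x s) + dist (h t (x s)) (h s (x s)) := by
          refine add_le_add_left ?_ _
          have := (hhx t ht).dist_le_mul (x t) (x s)
          rwa [Real.coe_toNNReal kh hkh] at this
  exact tendsto_iff_dist_tendsto_zero.2 key

/-- the penalized cost `J_i(u) = l(x_u(b)) + i ∫_a^b h⁺(t, x_u(t)) dt` is
Lipschitz on `(W, Δ)`: `|J_i(u) - J_i(v)| ≤ (k_l + i k_h (b-a)) e^{k_x(b-a)} k_u Δ(u,v)`,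
where `Δ(u,v) = ∫_a^b |u - v| dt` and `h⁺(t,x) = max{0, h(t,x)}`. -/
theorem penalized_cost_lipschitz
    {n k : ℕ} (a b : ℝ) (hab : a < b)
    (f : ℝ → Vec n → Vec k → Vec n) (U : ℝ → Set (Vec k))
    (kx ku : ℝ) (hkx : 0 ≤ kx) (hku : 0 ≤ ku)
    (hfmeas : Measurable fun q : ℝ × Vec n × Vec k => f q.1 q.2.1 q.2.2)
    (hflip : ∀ᵐ t ∂(volume.restrict (Icc a b)), ∀ x₁ x₂ : Vec n, ∀ u₁ ∈ U t, ∀ u₂ ∈ U t,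
      ‖f t x₁ u₁ - f t x₂ u₂‖ ≤ kx * ‖x₁ - x₂‖ + ku * ‖u₁ - u₂‖)
    (hgraph : MeasurableSet {q : ℝ × Vec k | q.1 ∈ Icc a b ∧ q.2 ∈ U q.1})
    (hUclosed : ∀ t, IsClosed (U t))
    (c : ℝ) (hc : 0 < c)
    (hbdd : ∀ᵐ t ∂(volume.restrict (Icc a b)), ∀ w ∈ U t, ‖w‖ ≤ c)
    (xa : Vec n) (Eb : Set (Vec n)) (hEb : IsClosed Eb)
    (xstar : ℝ → Vec n) (hxstar : Continuous xstar)
    (ε : ℝ) (hε : 0 < ε)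
    -- `l` is Lipschitz of rank `k_l` on the `ε`-ball around `x*(b)`
    (l : Vec n → ℝ) (kl : ℝ) (hkl : 0 ≤ kl)
    (hl : ∀ y z : Vec n, ‖y - xstar b‖ ≤ ε → ‖z - xstar b‖ ≤ ε →
      |l y - l z| ≤ kl * ‖y - z‖)
    -- assumption (A3) on `h`
    (h : ℝ → Vec n → ℝ) (kh : ℝ) (hkh : 0 < kh)
    (hht : ∀ x : Vec n, ContinuousOn (fun t => h t x) (Icc a b))
    (hhx : ∀ t ∈ Icc a b, LipschitzWith (Real.toNNReal kh) (fun x : Vec n => h t x))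
    (i : ℕ)
    -- two elements of `W` with their trajectories
    (u v : ℝ → Vec k) (xu xu' xv xv' : ℝ → Vec n)
    (hu : InW a b f U xa Eb xstar ε u xu xu')
    (hv : InW a b f U xa Eb xstar ε v xv xv') :
    |(l (xu b) + (i : ℝ) * ∫ t in a..b, max 0 (h t (xu t))) -
      (l (xv b) + (i : ℝ) * ∫ t in a..b, max 0 (h t (xv t)))| ≤
      (kl + (i : ℝ) * kh * (b - a)) * Real.exp (kx * (b - a)) * ku *
        ∫ t in a..b, ‖u t - v t‖ := by
  obtain ⟨humeas, huU, huint, -, hurep, huode, hutube, -⟩ := hu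
  obtain ⟨hvmeas, hvU, hvint, -, hvrep, hvode, hvtube, -⟩ := hv
  have hab' : a ≤ b := hab.le
  set D : ℝ := ∫ t in a..b, ‖u t - v t‖ with hD
  have huv_int : IntegrableOn (fun t => ‖u t - v t‖) (Icc a b) := by
    refine Integrable.mono' (integrable_const (2 * c)) (humeas.sub hvmeas).norm ?_
    filter_upwards [huU, hvU, hbdd] with t h1 h2 h3
    have h4 := norm_sub_le (u t) (v t)
    simp only [Real.norm_eq_abs, abs_norm]
    linarith [h3 (u t) h1, h3 (v t) h2]
  have huv_ii : ∀ t ∈ Icc a b, IntervalIntegrable (fun s => ‖u s - v s‖) volume a t := by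
    intro t ht
    apply MeasureTheory.IntegrableOn.intervalIntegrable
    rw [uIcc_of_le ht.1]
    exact huv_int.mono_set (Icc_subset_Icc le_rfl ht.2)
  have hD0 : 0 ≤ D := intervalIntegral.integral_nonneg hab' fun t _ => norm_nonneg _
  have hxu_cont : ContinuousOn xu (Icc a b) := traj_cont hab' huint hurep
  have hxv_cont : ContinuousOn xv (Icc a b) := traj_cont hab' hvint hvrep
  set w : ℝ → ℝ := fun t => ‖xu t - xv t‖ with hwdef
  have hwcont : ContinuousOn w (Icc a b) := (hxu_cont.sub hxv_cont).norm
  have hw0 : ∀ t ∈ Icc a b, 0 ≤ w t := fun t _ => norm_nonneg _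
  have haebound : ∀ᵐ t ∂(volume.restrict (Icc a b)),
      ‖xu' t - xv' t‖ ≤ kx * w t + ku * ‖u t - v t‖ := by
    filter_upwards [huU, hvU, huode, hvode, hflip] with t h1 h2 h3 h4 h5
    rw [h3, h4]
    exact h5 _ _ _ h1 _ h2
  have hkey : ∀ t ∈ Icc a b, w t ≤ kx * (∫ s in a..t, w s) + ku * D := by
    intro t ht
    have hsub : Icc a t ⊆ Icc a b := Icc_subset_Icc le_rfl ht.2
    have hii_u : IntervalIntegrable xu' volume a t := by
      apply MeasureTheory.IntegrableOn.intervalIntegrable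
      rw [uIcc_of_le ht.1]; exact huint.mono_set hsub
    have hii_v : IntervalIntegrable xv' volume a t := by
      apply MeasureTheory.IntegrableOn.intervalIntegrable
      rw [uIcc_of_le ht.1]; exact hvint.mono_set hsub
    have hii_norm : IntervalIntegrable (fun s => ‖xu' s - xv' s‖) volume a t :=
      (hii_u.sub hii_v).norm
    have hii_w : IntervalIntegrable w volume a t := by
      apply ContinuousOn.intervalIntegrable
      rw [uIcc_of_le ht.1]
      exact hwcont.mono hsub
    have hii_rhs : IntervalIntegrable (fun s => kx * w s + ku * ‖u s - v s‖) volume a t :=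
      (hii_w.const_mul kx).add ((huv_ii t ht).const_mul ku)
    have heq : xu t - xv t = ∫ s in a..t, (xu' s - xv' s) := by
      rw [hurep t ht, hvrep t ht, intervalIntegral.integral_sub hii_u hii_v]
      abel
    calc w t = ‖∫ s in a..t, (xu' s - xv' s)‖ := by
          rw [show w t = ‖xu t - xv t‖ from rfl, heq]
      _ ≤ ∫ s in a..t, ‖xu' s - xv' s‖ :=
          intervalIntegral.norm_integral_le_integral_norm ht.1
      _ ≤ ∫ s in a..t, (kx * w s + ku * ‖u s - v s‖) := by
          refine intervalIntegral.integral_mono_ae_restrict ht.1 hii_norm hii_rhs ?_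
          exact ae_restrict_of_ae_restrict_of_subset hsub haebound
      _ = kx * (∫ s in a..t, w s) + ku * ∫ s in a..t, ‖u s - v s‖ := by
          rw [intervalIntegral.integral_add (hii_w.const_mul kx) ((huv_ii t ht).const_mul ku),
            intervalIntegral.integral_const_mul, intervalIntegral.integral_const_mul]
      _ ≤ kx * (∫ s in a..t, w s) + ku * D := by
          refine add_le_add_right (mul_le_mul_of_nonneg_left ?_ hku) _
          exact intervalIntegral.integral_mono_interval le_rfl ht.1 ht.2
            (Eventually.of_forall fun s => norm_nonneg _) (huv_ii b ⟨hab', le_rfl⟩)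
  set M : ℝ := ku * D * Real.exp (kx * (b - a)) with hM
  have hMw : ∀ t ∈ Icc a b, w t ≤ M :=
    gronwall_int hab' hkx (mul_nonneg hku hD0) hwcont hw0 hkey
  have hM0 : 0 ≤ M := le_trans (hw0 a ⟨le_rfl, hab'⟩) (hMw a ⟨le_rfl, hab'⟩)
  have hlpart : |l (xu b) - l (xv b)| ≤ kl * M := by
    refine (hl _ _ (hutube b ⟨hab', le_rfl⟩) (hvtube b ⟨hab', le_rfl⟩)).trans ?_
    exact mul_le_mul_of_nonneg_left (hMw b ⟨hab', le_rfl⟩) hkl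
  set gu : ℝ → ℝ := fun t => max 0 (h t (xu t)) with hgu
  set gv : ℝ → ℝ := fun t => max 0 (h t (xv t)) with hgv
  have hgu_cont : ContinuousOn gu (Icc a b) :=
    (continuous_const.max continuous_id).comp_continuousOn (comp_cont hkh.le hht hhx hxu_cont)
  have hgv_cont : ContinuousOn gv (Icc a b) :=
    (continuous_const.max continuous_id).comp_continuousOn (comp_cont hkh.le hht hhx hxv_cont)
  have hgu_ii : IntervalIntegrable gu volume a b := by
    apply ContinuousOn.intervalIntegrable; rwa [uIcc_of_le hab']
  have hgv_ii : IntervalIntegrable gv volume a b := by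
    apply ContinuousOn.intervalIntegrable; rwa [uIcc_of_le hab']
  have hdiff : ∀ t ∈ Icc a b, |gu t - gv t| ≤ kh * w t := by
    intro t ht
    have h1 : |gu t - gv t| ≤ |h t (xu t) - h t (xv t)| := by
      rw [hgu, hgv]
      simp only [max_comm (0 : ℝ)]
      exact abs_max_sub_max_le_abs _ _ _
    refine h1.trans ?_
    have h2 := (hhx t ht).dist_le_mul (xu t) (xv t)
    rw [Real.coe_toNNReal kh hkh.le] at h2
    simpa [Real.dist_eq, dist_eq_norm] using h2
  have hintpart : |(∫ t in a..b, gu t) - ∫ t in a..b, gv t| ≤ kh * (b - a) * M := by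
    have e1 : (∫ t in a..b, gu t) - ∫ t in a..b, gv t = ∫ t in a..b, (gu t - gv t) :=
      (intervalIntegral.integral_sub hgu_ii hgv_ii).symm
    rw [e1]
    refine (intervalIntegral.abs_integral_le_integral_abs hab').trans ?_
    have h3 : (∫ t in a..b, |gu t - gv t|) ≤ ∫ t in a..b, kh * M := by
      refine intervalIntegral.integral_mono_on hab' ((hgu_ii.sub hgv_ii).abs) ?_ ?_
      · exact intervalIntegrable_const
      · intro t ht
        exact (hdiff t ht).trans (mul_le_mul_of_nonneg_left (hMw t ht) hkh.le)
    refine h3.trans ?_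
    rw [intervalIntegral.integral_const, smul_eq_mul]
    nlinarith
  calc |(l (xu b) + (i : ℝ) * ∫ t in a..b, gu t) -
      (l (xv b) + (i : ℝ) * ∫ t in a..b, gv t)|
      = |(l (xu b) - l (xv b)) + (i : ℝ) * ((∫ t in a..b, gu t) - ∫ t in a..b, gv t)| := by
        congr 1; ring
    _ ≤ |l (xu b) - l (xv b)| + (i : ℝ) * |(∫ t in a..b, gu t) - ∫ t in a..b, gv t| := by
        refine (abs_add_le _ _).trans ?_
        rw [abs_mul, Nat.abs_cast]
    _ ≤ kl * M + (i : ℝ) * (kh * (b - a) * M) :=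
        add_le_add hlpart (mul_le_mul_of_nonneg_left hintpart (Nat.cast_nonneg i))
    _ = (kl + (i : ℝ) * kh * (b - a)) * Real.exp (kx * (b - a)) * ku * D := by
        rw [hM]; ring
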